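/- The sequential compound ∗ → ∗ has game value 0, and more generally if G is dicotic then G → ∗ → ∗ = G as game values. -/

import Mathlib

universe u

namespace SetTheory

/-- Pregames (removed from Mathlib; restated with the old Mathlib meaning). -/
inductive PGame : Type (u + 1)
  | mk : ∀ α β : Type u, (α → PGame) → (β → PGame) → PGame

namespace PGame

def LeftMoves : PGame → Type u
  | mk l _ _ _ => l

def RightMoves : PGame → Type u
  | mk _ r _ _ => r

def moveLeft : ∀ g : PGame, LeftMoves g → PGame
  | mk _ _ L _ => L

def moveRight : ∀ g : PGame, RightMoves g → PGame
  | mk _ _ _ R => R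

instance : Zero PGame := ⟨⟨PEmpty, PEmpty, PEmpty.elim, PEmpty.elim⟩⟩

def star : PGame.{u} :=
  ⟨PUnit, PUnit, fun _ => 0, fun _ => 0⟩

def neg : PGame → PGame
  | ⟨l, r, L, R⟩ => ⟨r, l, fun i => neg (R i), fun i => neg (L i)⟩

instance : Neg PGame := ⟨neg⟩

/-- Auxiliary for `add`: `x + y` by recursion on `y`, given `xL i + ·` and `xR j + ·`. -/
def addAux (xl xr : Type u) (IHl : xl → PGame.{u} → PGame.{u}) (IHr : xr → PGame.{u} → PGame.{u}) :
    PGame.{u} → PGame.{u}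
  | mk yl yr yL yR =>
    mk (xl ⊕ yl) (xr ⊕ yr) (Sum.elim (fun i => IHl i (mk yl yr yL yR)) (fun j => addAux xl xr IHl IHr (yL j)))
      (Sum.elim (fun i => IHr i (mk yl yr yL yR)) (fun j => addAux xl xr IHl IHr (yR j)))

def add : PGame.{u} → PGame.{u} → PGame.{u}
  | mk xl xr xL xR => addAux xl xr (fun i => add (xL i)) (fun i => add (xR i))

instance : Add PGame.{u} := ⟨add⟩

instance : Sub PGame.{u} := ⟨fun x y => x + -y⟩

/-- Auxiliary for `leLF`: recursion on `y`. -/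
def leLFAux (xl xr : Type u) (IHl : xl → PGame.{u} → Prop × Prop) (IHr : xr → PGame.{u} → Prop × Prop) :
    PGame.{u} → Prop × Prop
  | mk yl yr yL yR =>
    ((∀ i, (IHl i (mk yl yr yL yR)).2) ∧ ∀ j, (leLFAux xl xr IHl IHr (yR j)).2,
      (∃ i, (leLFAux xl xr IHl IHr (yL i)).1) ∨ ∃ j, (IHr j (mk yl yr yL yR)).1)

/-- The pair `(x ≤ y, x ⧏ y)`, defined by simultaneous recursion as in old Mathlib. -/
def leLF : PGame.{u} → PGame.{u} → Prop × Prop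
  | mk xl xr xL xR => leLFAux xl xr (fun i => leLF (xL i)) (fun i => leLF (xR i))

instance : LE PGame.{u} := ⟨fun x y => (leLF x y).1⟩

def Equiv (x y : PGame.{u}) : Prop := x ≤ y ∧ y ≤ x

instance : HasEquiv PGame.{u} := ⟨Equiv⟩

/-- A short game: finitely many positions. -/
class inductive Short : PGame.{u} → Type (u + 1)
  | mk : ∀ {α β : Type u} {L : α → PGame.{u}} {R : β → PGame.{u}} (_ : ∀ i : α, Short (L i))
      (_ : ∀ j : β, Short (R j)) [Fintype α] [Fintype β], Short ⟨α, β, L, R⟩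

end PGame

end SetTheory

open SetTheory

open scoped PGame

namespace SeqCompound

open Classical in
/-- The sequential compound `G → H` of two pregames. -/
noncomputable def seqc : PGame → PGame → PGame
  | PGame.mk α β L R, H =>
    if Nonempty α then
      if Nonempty β then
        PGame.mk α β (fun a => seqc (L a) H) (fun b => seqc (R b) H)
      else
        PGame.mk α H.RightMoves (fun a => seqc (L a) H) H.moveRight
    else
      if Nonempty β then
        PGame.mk H.LeftMoves β H.moveLeft (fun b => seqc (R b) H)
      else H

/-- A pregame is dicotic (all-small) if in every subposition,
Left has an option iff Right has an option. -/
def Dicotic : PGame → Prop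
  | PGame.mk α β L R =>
    (Nonempty α ↔ Nonempty β) ∧ (∀ a, Dicotic (L a)) ∧ (∀ b, Dicotic (R b))

/-- The canonical nonnegative integer game `{n-1 | }`. -/
def intGame : ℕ → PGame
  | 0 => 0
  | n + 1 => PGame.mk PUnit PEmpty (fun _ => intGame n) PEmpty.elim

/-- `upSum k` is the disjunctive sum `↑¹ + ↑² + ⋯ + ↑ᵏ`. -/
def upSum : ℕ → PGame
  | 0 => 0
  | k + 1 => upSum k +
      PGame.mk PUnit PUnit (fun _ => 0) (fun _ => PGame.star - upSum k)

/-- `upPow k` is the game `↑^(k+1) = {0 | ∗ - (↑¹ + ⋯ + ↑ᵏ)}`. -/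
def upPow (k : ℕ) : PGame :=
  PGame.mk PUnit PUnit (fun _ => 0) (fun _ => PGame.star - upSum k)

/-- Sequential compound of a list of games. -/
noncomputable def seqList : List PGame → PGame
  | [] => 0
  | G :: l => seqc G (seqList l)

theorem le_mk' {xl xr : Type u} {xL : xl → PGame.{u}} {xR : xr → PGame.{u}}
    {yl yr : Type u} {yL : yl → PGame.{u}} {yR : yr → PGame.{u}} :
    (PGame.mk xl xr xL xR ≤ PGame.mk yl yr yL yR) ↔
      (∀ i, (PGame.leLF (xL i) (PGame.mk yl yr yL yR)).2) ∧
        ∀ j, (PGame.leLF (PGame.mk xl xr xL xR) (yR j)).2 := Iff.rfl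

theorem lf_mk' {xl xr : Type u} {xL : xl → PGame.{u}} {xR : xr → PGame.{u}}
    {yl yr : Type u} {yL : yl → PGame.{u}} {yR : yr → PGame.{u}} :
    (PGame.leLF (PGame.mk xl xr xL xR) (PGame.mk yl yr yL yR)).2 ↔
      (∃ i, PGame.mk xl xr xL xR ≤ yL i) ∨ ∃ j, xR j ≤ PGame.mk yl yr yL yR := Iff.rfl

theorem lf_of_le_moveLeft' (x : PGame.{u}) {yl yr : Type u} {yL : yl → PGame.{u}}
    {yR : yr → PGame.{u}} (i : yl) (h : x ≤ yL i) : (PGame.leLF x (PGame.mk yl yr yL yR)).2 := by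
  cases x
  exact lf_mk'.2 (Or.inl ⟨i, h⟩)

theorem lf_of_moveRight_le' {xl xr : Type u} {xL : xl → PGame.{u}} {xR : xr → PGame.{u}}
    (y : PGame.{u}) (j : xr) (h : xR j ≤ y) : (PGame.leLF (PGame.mk xl xr xL xR) y).2 := by
  cases y
  exact lf_mk'.2 (Or.inr ⟨j, h⟩)

theorem equiv_of_moves' {α β : Type u} {L L' : α → PGame.{u}} {R R' : β → PGame.{u}}
    (hL : ∀ i, L' i ≈ L i) (hR : ∀ j, R' j ≈ R j) :
    PGame.mk α β L' R' ≈ PGame.mk α β L R :=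
  ⟨le_mk'.2 ⟨fun i => lf_of_le_moveLeft' _ i (hL i).1, fun j => lf_of_moveRight_le' _ j (hR j).1⟩,
   le_mk'.2 ⟨fun i => lf_of_le_moveLeft' _ i (hL i).2, fun j => lf_of_moveRight_le' _ j (hR j).2⟩⟩

theorem le_empty' {a b a' b' : Type u} {L : a → PGame.{u}} {R : b → PGame.{u}}
    {L' : a' → PGame.{u}} {R' : b' → PGame.{u}} [IsEmpty a] [IsEmpty b] [IsEmpty a'] [IsEmpty b']
    (x : PGame.{u}) :
    (x ≤ PGame.mk a b L R ↔ x ≤ PGame.mk a' b' L' R') ∧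
      ((PGame.leLF x (PGame.mk a b L R)).2 ↔ (PGame.leLF x (PGame.mk a' b' L' R')).2) := by
  induction x with
  | mk xl xr xL xR IHL IHR =>
    constructor
    · rw [le_mk', le_mk']
      simp only [IsEmpty.forall_iff, and_true]
      exact forall_congr' fun i => (IHL i).2
    · rw [lf_mk', lf_mk']
      simp only [IsEmpty.exists_iff, false_or]
      exact exists_congr fun j => (IHR j).1

theorem empty_le' {a b a' b' : Type u} {L : a → PGame.{u}} {R : b → PGame.{u}}
    {L' : a' → PGame.{u}} {R' : b' → PGame.{u}} [IsEmpty a] [IsEmpty b] [IsEmpty a'] [IsEmpty b']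
    (x : PGame.{u}) :
    (PGame.mk a b L R ≤ x ↔ PGame.mk a' b' L' R' ≤ x) ∧
      ((PGame.leLF (PGame.mk a b L R) x).2 ↔ (PGame.leLF (PGame.mk a' b' L' R') x).2) := by
  induction x with
  | mk xl xr xL xR IHL IHR =>
    constructor
    · rw [le_mk', le_mk']
      simp only [IsEmpty.forall_iff, true_and]
      exact forall_congr' fun j => (IHR j).2
    · rw [lf_mk', lf_mk']
      simp only [IsEmpty.exists_iff, or_false]
      exact exists_congr fun i => (IHL i).1

lemma star_star : seqc PGame.star PGame.star =
    PGame.mk PUnit PUnit (fun _ => PGame.star) (fun _ => PGame.star) := by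
  show seqc (PGame.mk PUnit PUnit (fun _ => 0) (fun _ => 0)) PGame.star = _
  rw [seqc]
  rw [if_pos (⟨PUnit.unit⟩ : Nonempty PUnit), if_pos (⟨PUnit.unit⟩ : Nonempty PUnit)]
  congr 1 <;> funext _ <;>
  · show seqc (PGame.mk PEmpty PEmpty _ _) _ = _
    rw [seqc]
    simp [not_nonempty_iff.2 (by infer_instance : IsEmpty PEmpty)]

lemma star_star_equiv : seqc PGame.star PGame.star ≈ 0 := by
  rw [star_star]
  constructor
  · exact le_mk'.2 ⟨fun _ => lf_mk'.2 (Or.inr ⟨PUnit.unit,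
        le_mk'.2 ⟨fun i => PEmpty.elim i, fun j => PEmpty.elim j⟩⟩), fun j => PEmpty.elim j⟩
  · exact le_mk'.2 ⟨fun i => PEmpty.elim i,
      fun _ => lf_mk'.2 (Or.inl ⟨PUnit.unit,
        le_mk'.2 ⟨fun i => PEmpty.elim i, fun j => PEmpty.elim j⟩⟩)⟩

lemma seqc_equiv (H : PGame) (hH : H ≈ 0) : ∀ G : PGame, Dicotic G → seqc G H ≈ G := by
  intro G
  induction G with
  | mk α β L R IHL IHR =>
    rintro ⟨hab, hL, hR⟩
    rw [seqc]
    by_cases h : Nonempty α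
    · have hb : Nonempty β := hab.mp h
      rw [if_pos h, if_pos hb]
      exact equiv_of_moves' (fun i => IHL i (hL i)) (fun j => IHR j (hR j))
    · have hb : ¬ Nonempty β := fun hb => h (hab.mpr hb)
      rw [if_neg h, if_neg hb]
      haveI : IsEmpty α := not_nonempty_iff.mp h
      haveI : IsEmpty β := not_nonempty_iff.mp hb
      exact ⟨((le_empty' (L := L) (R := R) (L' := PEmpty.elim) (R' := PEmpty.elim) H).1).2 hH.1,
        ((empty_le' (L := L) (R := R) (L' := PEmpty.elim) (R' := PEmpty.elim) H).1).2 hH.2⟩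

end SeqCompound

open SeqCompound in
/-- `∗ → ∗ = 0`, and if `G` is dicotic then `G → ∗ → ∗ = G` as game values. -/
theorem seqc_star_star (G : PGame) [PGame.Short G] (hG : Dicotic G) :
    (seqc PGame.star PGame.star ≈ 0) ∧ seqc G (seqc PGame.star PGame.star) ≈ G :=
  ⟨star_star_equiv, seqc_equiv _ star_star_equiv G hG⟩
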